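/- (Gyöngy–Krylov criterion) Let X be a Polish space and {Z_n} a sequence of X-valued random elements on a probability space. Then Z_n converges in probability to some X-valued random element if and only if for every pair of subsequences {Z_{l_k}} and {Z_{m_k}} there exists a further subsequence such that the pairs (Z_{l_{k_j}}, Z_{m_{k_j}}) converge in law to a random element of X × X supported on the diagonal {(x,x) : x ∈ X}. -/

import Mathlib

open MeasureTheory Filter Topology

lemma GK_pair_extract {P : ℕ → ℕ → Prop}
    (h : ∀ N, ∃ n, N ≤ n ∧ ∃ m, N ≤ m ∧ P n m) :
    ∃ l m : ℕ → ℕ, StrictMono l ∧ StrictMono m ∧ ∀ k, P (l k) (m k) := by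
  choose n hn m hm hP using h
  let F : ℕ → ℕ := fun k => Nat.rec 0 (fun _ N => max (n N) (m N) + 1) k
  refine ⟨fun k => n (F k), fun k => m (F k), ?_, ?_, fun k => hP (F k)⟩ <;>
  · apply strictMono_nat_of_lt_succ
    intro k
    have h1 : n (F k) < F (k + 1) := by
      simp only [F]
      omega
    have h2 : m (F k) < F (k + 1) := by
      simp only [F]
      omega
    first
      | exact lt_of_lt_of_le h1 (hn _)
      | exact lt_of_lt_of_le h2 (hm _)

lemma GK_cauchy_aux {X : Type*} [MetricSpace X] [CompleteSpace X] (f : ℕ → X)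
    (K : ℕ) (h : ∀ k, K ≤ k → dist (f (k+1)) (f k) < (2:ℝ)⁻¹ ^ k) :
    ∃ x, Tendsto f atTop (𝓝 x) := by
  have hsum : Summable (fun k => dist (f k) (f (k+1))) := by
    rw [← summable_nat_add_iff K]
    refine Summable.of_nonneg_of_le (fun k => dist_nonneg) (fun k => ?_)
      ((summable_nat_add_iff K).mpr
        (summable_geometric_of_lt_one (r := (2:ℝ)⁻¹) (by norm_num) (by norm_num)))
    rw [dist_comm]
    exact (h (k + K) (Nat.le_add_left K k)).le
  exact cauchySeq_tendsto_of_complete (cauchySeq_of_summable_dist hsum)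

lemma GK_cauchy {X : Type*} [MetricSpace X] [CompleteSpace X]
    [TopologicalSpace.SeparableSpace X] [MeasurableSpace X] [BorelSpace X]
    {Ω : Type*} [MeasurableSpace Ω] (ℙ : Measure Ω) [IsProbabilityMeasure ℙ]
    (Z : ℕ → Ω → X) (hZ : ∀ n, Measurable (Z n))
    (hC : ∀ ε : ℝ, 0 < ε → ∀ δ : ENNReal, 0 < δ →
      ∃ N, ∀ n, N ≤ n → ∀ m, N ≤ m → ℙ {ω | ε ≤ dist (Z n ω) (Z m ω)} ≤ δ) :
    ∃ Zlim : Ω → X, Measurable Zlim ∧ TendstoInMeasure ℙ Z atTop Zlim := by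
  classical
  haveI : SecondCountableTopology X := UniformSpace.secondCountable_of_separable X
  have hc' : ∀ k : ℕ, ∃ N, ∀ n, N ≤ n → ∀ m, N ≤ m →
      ℙ {ω | (2:ℝ)⁻¹ ^ k ≤ dist (Z n ω) (Z m ω)} ≤ (2:ENNReal)⁻¹ ^ k := by
    intro k
    exact hC _ (by positivity) _ (ENNReal.pow_pos (by simp) k)
  choose N hNspec using hc'
  let ψ : ℕ → ℕ := fun k => Nat.rec (N 0) (fun k p => max (N (k+1)) p + 1) k
  have hψmono : StrictMono ψ := by
    apply strictMono_nat_of_lt_succ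
    intro k
    simp only [ψ]
    omega
  have hψN : ∀ k, N k ≤ ψ k := by
    intro k
    cases k with
    | zero => simp [ψ]
    | succ k => simp only [ψ]; omega
  set E : ℕ → Set Ω := fun k =>
    {ω | (2:ℝ)⁻¹ ^ k ≤ dist (Z (ψ (k+1)) ω) (Z (ψ k) ω)} with hEdef
  have hEm : ∀ k, ℙ (E k) ≤ (2:ENNReal)⁻¹ ^ k := fun k =>
    hNspec k _ (le_trans (hψN k) (hψmono.monotone (Nat.le_succ k))) _ (hψN k)
  have htsum : ∑' k, ℙ (E k) ≠ ⊤ := by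
    refine ne_top_of_le_ne_top ?_ (ENNReal.tsum_le_tsum hEm)
    rw [ENNReal.tsum_geometric]
    simp
  have hae : ∀ᵐ ω ∂ℙ, {k | ω ∈ E k}.Finite := ae_finite_setOf_mem htsum
  have haeC : ∀ᵐ ω ∂ℙ, ∃ x, Tendsto (fun k => Z (ψ k) ω) atTop (𝓝 x) := by
    filter_upwards [hae] with ω hω
    obtain ⟨K, hK⟩ := hω.bddAbove
    refine GK_cauchy_aux _ (K + 1) (fun k hk => ?_)
    by_contra hcon
    push_neg at hcon
    have : k ∈ {k | ω ∈ E k} := hcon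
    exact absurd (hK this) (by omega)
  let g : Ω → X := fun ω =>
    if h : ∃ x, Tendsto (fun k => Z (ψ k) ω) atTop (𝓝 x) then h.choose else Z 0 ω
  have hg : ∀ᵐ ω ∂ℙ, Tendsto (fun k => Z (ψ k) ω) atTop (𝓝 (g ω)) := by
    filter_upwards [haeC] with ω hω
    simp only [g, dif_pos hω]
    exact hω.choose_spec
  have hgm : AEMeasurable g ℙ :=
    aemeasurable_of_tendsto_metrizable_ae atTop (fun k => (hZ (ψ k)).aemeasurable) hg
  refine ⟨hgm.mk g, hgm.measurable_mk, ?_⟩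
  have hg' : ∀ᵐ ω ∂ℙ, Tendsto (fun k => Z (ψ k) ω) atTop (𝓝 (hgm.mk g ω)) := by
    filter_upwards [hg, hgm.ae_eq_mk] with ω h1 h2
    rwa [h2] at h1
  have hsub : TendstoInMeasure ℙ (fun k => Z (ψ k)) atTop (hgm.mk g) :=
    tendstoInMeasure_of_tendsto_ae (fun k => (hZ (ψ k)).aestronglyMeasurable) hg'
  rw [tendstoInMeasure_iff_dist] at hsub ⊢
  intro ε hε
  rw [ENNReal.tendsto_atTop_zero]
  intro δ hδ
  obtain ⟨N₁, hN₁⟩ := hC (ε / 2) (by positivity) (δ / 2) (ENNReal.half_pos hδ.ne')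
  have := (ENNReal.tendsto_atTop_zero.mp (hsub (ε / 2) (by positivity))) (δ / 2)
    (ENNReal.half_pos hδ.ne')
  obtain ⟨K, hK⟩ := this
  set k₀ := max K N₁ with hk₀
  refine ⟨N₁, fun n hn => ?_⟩
  have hsubset : {ω | ε ≤ dist (Z n ω) (hgm.mk g ω)} ⊆
      {ω | ε / 2 ≤ dist (Z n ω) (Z (ψ k₀) ω)} ∪
      {ω | ε / 2 ≤ dist (Z (ψ k₀) ω) (hgm.mk g ω)} := by
    intro ω hω
    simp only [Set.mem_setOf_eq, Set.mem_union] at hω ⊢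
    by_contra hcon
    push_neg at hcon
    have := dist_triangle (Z n ω) (Z (ψ k₀) ω) (hgm.mk g ω)
    linarith [hcon.1, hcon.2]
  calc ℙ {ω | ε ≤ dist (Z n ω) (hgm.mk g ω)}
      ≤ ℙ ({ω | ε / 2 ≤ dist (Z n ω) (Z (ψ k₀) ω)} ∪
          {ω | ε / 2 ≤ dist (Z (ψ k₀) ω) (hgm.mk g ω)}) := measure_mono hsubset
    _ ≤ ℙ {ω | ε / 2 ≤ dist (Z n ω) (Z (ψ k₀) ω)} +
        ℙ {ω | ε / 2 ≤ dist (Z (ψ k₀) ω) (hgm.mk g ω)} := measure_union_le _ _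
    _ ≤ δ / 2 + δ / 2 := by
        gcongr
        · exact hN₁ n hn _ ((le_max_right K N₁).trans hψmono.le_apply)
        · exact hK k₀ (le_max_left K N₁)
    _ = δ := ENNReal.add_halves δ

/-- Gyöngy–Krylov criterion: a sequence of random elements of a Polish space
converges in probability iff every pair of subsequences admits a further
subsequence along which the pairs converge in law to a limit supported on the
diagonal. -/
theorem stmt10 {X : Type*} [MetricSpace X] [CompleteSpace X]
    [TopologicalSpace.SeparableSpace X] [MeasurableSpace X] [BorelSpace X]
    {Ω : Type*} [MeasurableSpace Ω] (ℙ : Measure Ω) [IsProbabilityMeasure ℙ]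
    (Z : ℕ → Ω → X) (hZ : ∀ n, Measurable (Z n)) :
    (∃ Zlim : Ω → X, Measurable Zlim ∧ TendstoInMeasure ℙ Z atTop Zlim) ↔
    (∀ l m : ℕ → ℕ, StrictMono l → StrictMono m →
      ∃ φ : ℕ → ℕ, StrictMono φ ∧
        ∃ ν : Measure (X × X), IsProbabilityMeasure ν ∧
          ν {p : X × X | p.1 = p.2} = 1 ∧
          ∀ f : BoundedContinuousFunction (X × X) ℝ,
            Tendsto (fun k => ∫ ω, f (Z (l (φ k)) ω, Z (m (φ k)) ω) ∂ℙ) atTop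
              (𝓝 (∫ p, f p ∂ν))) := by
  haveI : SecondCountableTopology X := UniformSpace.secondCountable_of_separable X
  constructor
  · rintro ⟨Zlim, hml, hT⟩ l m hl hm
    have hTl : TendstoInMeasure ℙ (fun k => Z (l k)) atTop Zlim :=
      fun ε hε => (hT ε hε).comp hl.tendsto_atTop
    obtain ⟨φ₁, hφ₁, hae₁⟩ := hTl.exists_seq_tendsto_ae
    have hTm : TendstoInMeasure ℙ (fun k => Z (m (φ₁ k))) atTop Zlim :=
      fun ε hε => (hT ε hε).comp ((hm.comp hφ₁).tendsto_atTop)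
    obtain ⟨φ₂, hφ₂, hae₂⟩ := hTm.exists_seq_tendsto_ae
    refine ⟨φ₁ ∘ φ₂, hφ₁.comp hφ₂, Measure.map (fun ω => (Zlim ω, Zlim ω)) ℙ, ?_, ?_, ?_⟩
    · exact Measure.isProbabilityMeasure_map (hml.prodMk hml).aemeasurable
    · rw [Measure.map_apply (hml.prodMk hml)
        ((isClosed_eq continuous_fst continuous_snd).measurableSet)]
      have : (fun ω => (Zlim ω, Zlim ω)) ⁻¹' {p : X × X | p.1 = p.2} = Set.univ := by
        ext ω; simp
      rw [this]
      exact measure_univ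
    · intro f
      have hpair : ∀ᵐ ω ∂ℙ, Tendsto
          (fun k => (Z (l ((φ₁ ∘ φ₂) k)) ω, Z (m ((φ₁ ∘ φ₂) k)) ω)) atTop
          (𝓝 (Zlim ω, Zlim ω)) := by
        filter_upwards [hae₁, hae₂] with ω h1 h2
        exact (h1.comp hφ₂.tendsto_atTop).prodMk_nhds h2
      have hint : ∫ p, f p ∂(Measure.map (fun ω => (Zlim ω, Zlim ω)) ℙ) =
          ∫ ω, f (Zlim ω, Zlim ω) ∂ℙ :=
        integral_map (hml.prodMk hml).aemeasurable f.continuous.aestronglyMeasurable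
      rw [hint]
      refine tendsto_integral_of_dominated_convergence (fun _ => ‖f‖) ?_ ?_ ?_ ?_
      · intro k
        exact (f.continuous.measurable.comp ((hZ _).prodMk (hZ _))).aestronglyMeasurable
      · exact integrable_const _
      · intro k
        filter_upwards with ω
        exact f.norm_coe_le_norm _
      · filter_upwards [hpair] with ω hω
        exact (f.continuous.tendsto _).comp hω
  · intro h
    refine GK_cauchy ℙ Z hZ ?_
    by_contra hc
    push_neg at hc
    obtain ⟨ε, hε, δ, hδ, hN⟩ := hc
    obtain ⟨l, m, hl, hm, hP⟩ := GK_pair_extract hN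
    obtain ⟨φ, hφ, ν, hνp, hνdiag, hconv⟩ := h l m hl hm
    set W : ℕ → Ω → X × X := fun k ω => (Z (l (φ k)) ω, Z (m (φ k)) ω) with hW
    have hWm : ∀ k, Measurable (W k) := fun k => (hZ _).prodMk (hZ _)
    let μs : ℕ → ProbabilityMeasure (X × X) := fun k =>
      ⟨Measure.map (W k) ℙ, Measure.isProbabilityMeasure_map (hWm k).aemeasurable⟩
    let νP : ProbabilityMeasure (X × X) := ⟨ν, hνp⟩
    have htend : Tendsto μs atTop (𝓝 νP) := by
      rw [MeasureTheory.ProbabilityMeasure.tendsto_iff_forall_integral_tendsto]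
      intro f
      have : ∀ k, ∫ p, f p ∂(μs k : Measure (X × X)) = ∫ ω, f (W k ω) ∂ℙ := fun k =>
        integral_map (hWm k).aemeasurable f.continuous.aestronglyMeasurable
      simp only [this]
      exact hconv f
    set C : Set (X × X) := {p | ε ≤ dist p.1 p.2} with hC
    have hCclosed : IsClosed C :=
      isClosed_le continuous_const (continuous_fst.dist continuous_snd)
    have hνC : ν C = 0 := by
      have hsub : C ⊆ {p : X × X | p.1 = p.2}ᶜ := fun p hp hdiag => by
        have h1 : ε ≤ dist p.1 p.2 := hp
        have h2 : p.1 = p.2 := hdiag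
        rw [h2, dist_self] at h1
        linarith
      refine measure_mono_null hsub ?_
      rw [measure_compl ((isClosed_eq continuous_fst continuous_snd).measurableSet)
        (measure_ne_top ν _), hνdiag, measure_univ, tsub_self]
    have hlimsup : atTop.limsup (fun k => (μs k : Measure (X × X)) C) ≤ 0 := by
      have := ProbabilityMeasure.limsup_measure_closed_le_of_tendsto htend hCclosed
      rw [show ((νP : Measure (X × X)) C) = 0 from hνC] at this
      exact this
    have hge : δ ≤ atTop.limsup (fun k => (μs k : Measure (X × X)) C) := by
      refine le_limsup_of_frequently_le (Frequently.of_forall (fun k => ?_))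
      have : (μs k : Measure (X × X)) C = ℙ {ω | ε ≤ dist (Z (l (φ k)) ω) (Z (m (φ k)) ω)} := by
        show Measure.map (W k) ℙ C = _
        rw [Measure.map_apply (hWm k) hCclosed.measurableSet]
        rfl
      rw [this]
      exact (hP (φ k)).le
    exact absurd (hge.trans hlimsup) (by simpa using hδ.ne')
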